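/- Let G_0 = G and let W_1, …, W_r be such that each W_t is a clique of G_{t−1} and G_t = G_{t−1}|W_t, and define F_t = {x ∈ STAB(G) : x_{W_j} = 1 for j = 1,…,t}. Then for every t ∈ {1,…,r}, the inequality x_{W_t} ≤ 1 is valid for F_{t−1}. -/

import Mathlib

open Finset

variable {V : Type*}

/-- A stable (independent) set of a graph: pairwise non-adjacent vertices. -/
def IsStable (G : SimpleGraph V) (S : Finset V) : Prop :=
  ∀ u ∈ S, ∀ v ∈ S, ¬ G.Adj u v

/-- The characteristic vectors of stable sets of `G`. -/
def stableVecs [DecidableEq V] (G : SimpleGraph V) : Set (V → ℝ) :=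
  {x | ∃ S : Finset V, IsStable G S ∧ x = fun v => if v ∈ S then (1 : ℝ) else 0}

/-- The stable set polytope `STAB(G)`. -/
def STAB [DecidableEq V] (G : SimpleGraph V) : Set (V → ℝ) :=
  convexHull ℝ (stableVecs G)

/-- `x_W = ∑_{v ∈ W} x_v`. -/
def vsum (W : Finset V) (x : V → ℝ) : ℝ := ∑ v ∈ W, x v

/-- The clique projection `G|W`: add every non-edge `uv` with `W ⊆ N(u) ∪ N(v)`. -/
def cliqueProj (G : SimpleGraph V) (W : Finset V) : SimpleGraph V where
  Adj u v := G.Adj u v ∨ (u ≠ v ∧ ¬G.Adj u v ∧ ∀ w ∈ W, G.Adj w u ∨ G.Adj w v)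
  symm := by
    constructor
    rintro u v (h | ⟨hne, hna, h⟩)
    · exact Or.inl h.symm
    · exact Or.inr ⟨hne.symm, fun h' => hna h'.symm, fun w hw => (h w hw).symm⟩
  loopless := by
    constructor
    rintro u (h | ⟨hne, _, _⟩)
    · first | exact G.irrefl h | exact G.loopless.irrefl u h
    · exact hne rfl

/-- Iterated projected graphs: `G_0 = G`, `G_t = G_{t-1} | W_t`. -/
def projSeq (G : SimpleGraph V) (W : ℕ → Finset V) : ℕ → SimpleGraph V
  | 0 => G
  | t + 1 => cliqueProj (projSeq G W t) (W (t + 1))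

/-- `F_t = {x ∈ STAB(G) : x_{W_j} = 1, j = 1, …, t}`. -/
def Fface [DecidableEq V] (G : SimpleGraph V) (W : ℕ → Finset V) (t : ℕ) : Set (V → ℝ) :=
  {x ∈ STAB G | ∀ j ∈ Finset.Icc 1 t, vsum (W j) x = 1}

/-- `α(G[H], c)`: the maximum `c`-weight of a stable set of `G` contained in `H`. -/
noncomputable def alphaW (G : SimpleGraph V) (H : Finset V) (c : V → ℝ) : ℝ :=
  sSup {r : ℝ | ∃ S : Finset V, S ⊆ H ∧ IsStable G S ∧ r = ∑ v ∈ S, c v}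

/-- `α(G[H])`: the maximum cardinality of a stable set of `G` contained in `H`. -/
noncomputable def alphaOn (G : SimpleGraph V) (H : Finset V) : ℕ :=
  sSup {k : ℕ | ∃ S : Finset V, S ⊆ H ∧ IsStable G S ∧ S.card = k}

/-- The stability number `α(G)`. -/
noncomputable def alphaNum [Fintype V] (G : SimpleGraph V) : ℕ :=
  sSup {k : ℕ | ∃ S : Finset V, IsStable G S ∧ S.card = k}

/-- `cᵀx`. -/
def dotp [Fintype V] (c x : V → ℝ) : ℝ := ∑ v, c v * x v

/-- The affine dimension of a set of points. -/
noncomputable def affDim (s : Set (V → ℝ)) : ℕ := Module.finrank ℝ (vectorSpan ℝ s)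

/-- Strong hypertree (with hyperedges of size `k`). -/
inductive IsStrongHypertree [DecidableEq V] (k : ℕ) : Finset V → Finset (Finset V) → Prop
  | base (V' : Finset V) : IsStrongHypertree k V' {V'}
  | step (V' : Finset V) (E : Finset (Finset V)) (v : V) (Wi : Finset V) :
      v ∈ V' → v ∈ Wi → Wi ∈ E →
      (∃ Wj ∈ E, Wj ≠ Wi ∧ (Wi ∩ Wj).card = k - 1) →
      IsStrongHypertree k (V'.erase v) (E.erase Wi) →
      IsStrongHypertree k V' E

/-- Condition (I): `|W_t| = k` and the subgraph of `G_{t-1}` induced by `W_1 ∪ ⋯ ∪ W_t`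
is `k`-partite with stable vertex classes `V_t^1, …, V_t^k`. -/
def CondI [DecidableEq V] (G : SimpleGraph V) (W : ℕ → Finset V)
    (Vc : ℕ → ℕ → Finset V) (k t : ℕ) : Prop :=
  (W t).card = k ∧
  (Finset.Icc 1 k).biUnion (Vc t) = (Finset.Icc 1 t).biUnion W ∧
  (∀ i ∈ Finset.Icc 1 k, ∀ j ∈ Finset.Icc 1 k, i ≠ j → Disjoint (Vc t i) (Vc t j)) ∧
  (∀ i ∈ Finset.Icc 1 k, ∀ u ∈ Vc t i, ∀ v ∈ Vc t i, ¬(projSeq G W (t - 1)).Adj u v)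

/-- Condition (II): `T_t = (V_t, {W_1, …, W_t})` is a strong hypertree. -/
def CondII [DecidableEq V] (W : ℕ → Finset V) (Vc : ℕ → ℕ → Finset V) (k t : ℕ) : Prop :=
  IsStrongHypertree k ((Finset.Icc 1 k).biUnion (Vc t)) ((Finset.Icc 1 t).image W)

/-- Condition (III): every `w ∉ V_t` misses some class `V_t^i` in `G_{t-1}`. -/
def CondIII [DecidableEq V] (G : SimpleGraph V) (W : ℕ → Finset V)
    (Vc : ℕ → ℕ → Finset V) (k t : ℕ) : Prop :=
  ∀ w : V, w ∉ (Finset.Icc 1 k).biUnion (Vc t) →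
    ∃ i ∈ Finset.Icc 1 k, ∀ u ∈ Vc t i, ¬(projSeq G W (t - 1)).Adj w u

/-- Condition (IV). -/
def CondIV [Fintype V] [DecidableEq V] (G : SimpleGraph V) (W : ℕ → Finset V)
    (Vc : ℕ → ℕ → Finset V) (k r : ℕ) : Prop :=
  ∀ i ∈ Finset.Icc 1 (k - 1), ∀ t ∈ Finset.Icc 1 r, ∀ v ∈ W t ∩ Vc t i,
    ∀ w ∈ Finset.univ \ (Finset.Icc 1 k).biUnion (Vc r),
      (∃ z ∈ Vc r i, (projSeq G W r).Adj z w) →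
      (G.Adj v w ∨ ∃ t' ∈ Finset.Icc 1 r,
        (projSeq G W (t' - 1)).IsClique (W t : Set V) ∧
        W t ≠ W t' ∧ (W t ∩ W t').card = k - 1 ∧
        v ∉ W t' ∧ ∃ v' ∈ W t' ∩ Vc r i, (projSeq G W (t' - 1)).Adj v' w)

/-- Condition (V): no vertex of `V_t^k` has a neighbor in `V_r^0` in the graph `G_r`. -/
def CondV [Fintype V] [DecidableEq V] (G : SimpleGraph V) (W : ℕ → Finset V)
    (Vc : ℕ → ℕ → Finset V) (k r t : ℕ) : Prop :=
  ∀ v ∈ Vc t k, ∀ w ∈ Finset.univ \ (Finset.Icc 1 k).biUnion (Vc r),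
    ¬(projSeq G W r).Adj v w

/-- `STAB(G[H])`, embedded in `ℝ^V` (coordinates outside `H` are zero). -/
def STABon [DecidableEq V] (G : SimpleGraph V) (H : Finset V) : Set (V → ℝ) :=
  convexHull ℝ
    {x | ∃ S : Finset V, S ⊆ H ∧ IsStable G S ∧ x = fun v => if v ∈ S then (1 : ℝ) else 0}

section Aux

variable {V : Type*} [DecidableEq V]

/-- `vsum W` as a linear map. -/
def vsumL (W : Finset V) : (V → ℝ) →ₗ[ℝ] ℝ where
  toFun x := ∑ v ∈ W, x v
  map_add' x y := by simp [Finset.sum_add_distrib]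
  map_smul' c x := by simp [Finset.mul_sum]

omit [DecidableEq V] in
lemma vsumL_apply (W : Finset V) (x : V → ℝ) : vsumL W x = vsum W x := rfl

lemma vsum_char (W S : Finset V) :
    vsum W (fun v => if v ∈ S then (1 : ℝ) else 0) = (W ∩ S).card := by
  simp [vsum, Finset.sum_ite_mem]

/-- Face lemma: if a linear functional is ≤ 1 on `A` and equals 1 at a point of the
hull, the point is in the hull of the face. -/
lemma face_lemma {E : Type*} [AddCommGroup E] [Module ℝ E]
    (f : E →ₗ[ℝ] ℝ) (A : Set E) (hA : ∀ a ∈ A, f a ≤ 1)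
    {x : E} (hx : x ∈ convexHull ℝ A) (hfx : f x = 1) :
    x ∈ convexHull ℝ {a ∈ A | f a = 1} := by
  rw [_root_.convexHull_eq] at hx
  obtain ⟨ι, t, w, z, hw0, hw1, hz, hcm⟩ := hx
  have hxeq : x = ∑ i ∈ t, w i • z i := by
    rw [← hcm, Finset.centerMass_eq_of_sum_1 _ _ hw1]
  have hfsum : ∑ i ∈ t, w i * f (z i) = 1 := by
    rw [← hfx, hxeq]; simp [map_sum]
  have hle : ∀ i ∈ t, w i * f (z i) ≤ w i := by
    intro i hi
    calc w i * f (z i) ≤ w i * 1 := by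
          exact mul_le_mul_of_nonneg_left (hA _ (hz i hi)) (hw0 i hi)
      _ = w i := mul_one _
  have heach : ∀ i ∈ t, w i * f (z i) = w i :=
    (Finset.sum_eq_sum_iff_of_le hle).mp (by rw [hfsum, hw1])
  set t' := t.filter (fun i => w i ≠ 0) with ht'
  have ht'sub : t' ⊆ t := Finset.filter_subset _ _
  have hsum' : ∑ i ∈ t', w i = 1 := by
    rw [ht', Finset.sum_filter_ne_zero, hw1]
  have hcm' : t'.centerMass w z = x := by
    rw [Finset.centerMass_eq_of_sum_1 _ _ hsum', hxeq]
    refine Finset.sum_subset ht'sub ?_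
    intro i hi hni
    have : w i = 0 := by
      by_contra h
      exact hni (Finset.mem_filter.mpr ⟨hi, h⟩)
    simp [this]
  rw [← hcm']
  refine Finset.centerMass_mem_convexHull _ (fun i hi => hw0 i (ht'sub hi))
    (by rw [hsum']; norm_num) ?_
  intro i hi
  have hwi : w i ≠ 0 := (Finset.mem_filter.mp hi).2
  have hit : i ∈ t := ht'sub hi
  exact ⟨hz i hit, mul_left_cancel₀ hwi (by rw [mul_one]; exact heach i hit)⟩

/-- Stability is preserved by clique projection when the stable set meets the clique. -/
lemma isStable_cliqueProj {G : SimpleGraph V} {S Wc : Finset V}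
    (hS : IsStable G S) (hmeet : (S ∩ Wc).Nonempty) :
    IsStable (cliqueProj G Wc) S := by
  obtain ⟨w, hw⟩ := hmeet
  have hwS : w ∈ S := (Finset.mem_inter.mp hw).1
  have hwW : w ∈ Wc := (Finset.mem_inter.mp hw).2
  rintro u hu v hv (h | ⟨hne, hna, h⟩)
  · exact hS u hu v hv h
  · rcases h w hwW with h' | h'
    · exact hS w hwS u hu h'
    · exact hS w hwS v hv h'

/-- If a stable set of `G` meets each `W_j`, `j ≤ t`, then it is stable in `G_t`. -/
lemma isStable_projSeq {G : SimpleGraph V} {W : ℕ → Finset V} {S : Finset V}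
    (hS : IsStable G S) :
    ∀ t : ℕ, (∀ j ∈ Finset.Icc 1 t, (S ∩ W j).Nonempty) → IsStable (projSeq G W t) S := by
  intro t
  induction t with
  | zero => intro _; exact hS
  | succ t ih =>
    intro h
    have h1 : IsStable (projSeq G W t) S := by
      refine ih fun j hj => h j ?_
      rw [Finset.mem_Icc] at hj ⊢; omega
    exact isStable_cliqueProj h1 (h (t + 1) (by simp))


lemma clique_inter_card_le {V : Type*} [DecidableEq V] {G : SimpleGraph V} {S Wc : Finset V}
    (hcl : G.IsClique (Wc : Set V)) (hS : IsStable G S) : (Wc ∩ S).card ≤ 1 := by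
  by_contra h
  push_neg at h
  obtain ⟨a, ha, b, hb, hab⟩ := Finset.one_lt_card.mp h
  rw [Finset.mem_inter] at ha hb
  exact hS a ha.2 b hb.2 (hcl (Finset.mem_coe.mpr ha.1) (Finset.mem_coe.mpr hb.1) hab)

end Aux

/-- the inequality `x_{W_t} ≤ 1` is valid for `F_{t-1}`. -/
theorem stmt7 {V : Type*} [Fintype V] [DecidableEq V] (G : SimpleGraph V)
    (r : ℕ) (W : ℕ → Finset V)
    (hclique : ∀ t ∈ Finset.Icc 1 r, (projSeq G W (t - 1)).IsClique (W t : Set V)) :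
    ∀ t ∈ Finset.Icc 1 r, ∀ x ∈ Fface G W (t - 1), vsum (W t) x ≤ 1 := by
  set A : ℕ → Set (V → ℝ) := fun t =>
    {y | ∃ S : Finset V, IsStable G S ∧ (∀ j ∈ Finset.Icc 1 t, (S ∩ W j).card = 1) ∧
      y = fun v => if v ∈ S then (1 : ℝ) else 0} with hA
  -- an element of `A t` is stable in `G_t`, so any later clique bound applies
  have hbound : ∀ s : ℕ, s ∈ Finset.Icc 1 r →
      ∀ a ∈ A (s - 1), vsum (W s) a ≤ 1 := by
    intro s hs a ha
    obtain ⟨S, hS, hcard, rfl⟩ := ha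
    have hstab : IsStable (projSeq G W (s - 1)) S := by
      refine isStable_projSeq hS (s - 1) fun j hj => ?_
      refine Finset.card_pos.mp ?_
      rw [hcard j ?_]
      · norm_num
      · exact hj
    rw [vsum_char]
    exact_mod_cast clique_inter_card_le (hclique s hs) hstab
  -- key induction: points of `F_t` lie in the hull of `A t`
  have key : ∀ t : ℕ, t ≤ r → ∀ x ∈ Fface G W t, x ∈ convexHull ℝ (A t) := by
    intro t
    induction t with
    | zero =>
      intro _ x hx
      refine convexHull_mono ?_ hx.1
      rintro y ⟨S, hS, rfl⟩
      exact ⟨S, hS, by simp, rfl⟩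
    | succ t ih =>
      intro htr x hx
      have hxt : x ∈ Fface G W t := by
        refine ⟨hx.1, fun j hj => hx.2 j ?_⟩
        rw [Finset.mem_Icc] at hj ⊢; omega
      have hxhull := ih (by omega) x hxt
      have hsr : t + 1 ∈ Finset.Icc 1 r := by rw [Finset.mem_Icc]; omega
      have hle : ∀ a ∈ A t, vsumL (W (t + 1)) a ≤ 1 := fun a ha =>
        hbound (t + 1) hsr a (by simpa using ha)
      have hfx : vsumL (W (t + 1)) x = 1 := hx.2 (t + 1) (by rw [Finset.mem_Icc]; omega)
      have hface := face_lemma (vsumL (W (t + 1))) (A t) hle hxhull hfx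
      refine convexHull_mono ?_ hface
      rintro y ⟨⟨S, hS, hcard, rfl⟩, hy1⟩
      refine ⟨S, hS, fun j hj => ?_, rfl⟩
      rw [Finset.mem_Icc] at hj
      rcases Nat.lt_or_ge j (t + 1) with h | h
      · exact hcard j (Finset.mem_Icc.mpr ⟨hj.1, by omega⟩)
      · have hj1 : j = t + 1 := by omega
        subst hj1
        have : vsumL (W (t + 1)) (fun v => if v ∈ S then (1 : ℝ) else 0) = 1 := hy1
        rw [vsumL_apply, vsum_char] at this
        rw [Finset.inter_comm]
        exact_mod_cast this
  intro t ht x hx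
  have ht' := Finset.mem_Icc.mp ht
  have hxhull := key (t - 1) (by omega) x hx
  have hsub : convexHull ℝ (A (t - 1)) ⊆ {y | vsumL (W t) y ≤ 1} := by
    refine convexHull_min ?_ (convex_halfSpace_le (vsumL (W t)).isLinear 1)
    intro a ha
    exact hbound t ht a ha
  exact hsub hxhull
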